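/- Plateau covariance saturation: suppose there exist 1 ≤ k < p, σ > ε > 0 with σ ≤ 1 such that σ₁ = … = σ_k = σ and σ_{k+1} = … = σ_p = ε, and suppose there is α* > 0 such that |⟨β*, e_j⟩| = α* for j ≤ k and ⟨β*, e_j⟩ = 0 for j > k. Let SNR := (‖Σ^{1/2}β*‖₂/σ_ξ)·σ√N/√(Tr(Σ_{Jᶜ}²)), where J = {1,…,k} (explicitly SNR = (α*/σ_ξ)·σ^{3/2}·√(kN/(p−k))/ε). Fix b ∈ (0,1), assume 4 < SNR ≤ b·σ/ε, and let I := {t > 1 : ε/b ≤ 1/t < σ} (for every t ∈ I the estimation dimension satisfies k* = k and β*_{J*ᶜ} = 0). Then inf_{t ∈ I} r^{GF}_t(V_{J*},V_{J*ᶜ}) ≤ inf_{t ∈ I} r^{Ridge}_t(V_{J*},V_{J*ᶜ}), where r^{GF}_t is the rate with residual function ψ_t^{GF}(x) = exp(−tx) and r^{Ridge}_t is the rate with residual function ψ_t^{Ridge}(x) = 1/(xt+1). -/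

import Mathlib

open Matrix

namespace SpecFSD5

noncomputable def l2norm {n : ℕ} (v : Fin n → ℝ) : ℝ := Real.sqrt (∑ i, v i ^ 2)

def ONFamily {p : ℕ} (e : Fin p → Fin p → ℝ) : Prop :=
  (∀ j, ∑ i, e j i * e j i = 1) ∧ ∀ j k, j ≠ k → ∑ i, e j i * e k i = 0

noncomputable def specMat {p : ℕ} (e : Fin p → Fin p → ℝ) (c : Fin p → ℝ) :
    Matrix (Fin p) (Fin p) ℝ :=
  ∑ j, c j • Matrix.vecMulVec (e j) (e j)

/-- The rate `r^ψ_t(V_J,V_Jᶜ)` with `J = {1,…,k}` (0-indexed: `j < k`). -/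
noncomputable def rate {p : ℕ} (N : ℕ) (e : Fin p → Fin p → ℝ) (σv : Fin p → ℝ)
    (ψ : ℝ → ℝ) (k : ℕ) (β : Fin p → ℝ) (σξ t : ℝ) : ℝ :=
  l2norm ((specMat e fun j => if (j : ℕ) < k then Real.sqrt (σv j) else 0).mulVec
      ((specMat e fun j => ψ (σv j)).mulVec
        ((specMat e fun j => if (j : ℕ) < k then 1 else 0).mulVec β)))
    + σξ * Real.sqrt ((k : ℝ) / N)
    + l2norm ((specMat e fun j => if (j : ℕ) < k then 0 else Real.sqrt (σv j)).mulVec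
        ((specMat e fun j => if (j : ℕ) < k then 0 else 1).mulVec β))
    + σξ * t * Real.sqrt (Matrix.trace
        ((specMat e fun j => if (j : ℕ) < k then 0 else σv j) *
          (specMat e fun j => if (j : ℕ) < k then 0 else σv j)) / N)


lemma specMat_mulVec {p : ℕ} (e : Fin p → Fin p → ℝ) (c v : Fin p → ℝ) :
    (specMat e c).mulVec v = fun i => ∑ j, (c j * ∑ i', e j i' * v i') * e j i := by
  funext i
  simp only [specMat, Matrix.mulVec, dotProduct, Matrix.sum_apply, Matrix.smul_apply,
    Matrix.vecMulVec_apply, smul_eq_mul, Finset.sum_mul, Finset.mul_sum]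
  rw [Finset.sum_comm]
  refine Finset.sum_congr rfl fun j _ => ?_
  refine Finset.sum_congr rfl fun i' _ => ?_
  ring

lemma specMat_mulVec_span {p : ℕ} {e : Fin p → Fin p → ℝ} (he : ONFamily e)
    (c d : Fin p → ℝ) :
    (specMat e c).mulVec (fun i => ∑ j, d j * e j i) = fun i => ∑ j, (c j * d j) * e j i := by
  rw [specMat_mulVec]
  funext i
  refine Finset.sum_congr rfl fun j _ => ?_
  congr 1
  have key : (∑ i', e j i' * ∑ j', d j' * e j' i') = d j := by
    have h1 : ∀ i', e j i' * ∑ j', d j' * e j' i' = ∑ j', d j' * (e j i' * e j' i') := by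
      intro i'; rw [Finset.mul_sum]; exact Finset.sum_congr rfl fun j' _ => by ring
    simp_rw [h1]
    rw [Finset.sum_comm]
    have h2 : ∀ j', (∑ i', d j' * (e j i' * e j' i')) = d j' * ∑ i', e j i' * e j' i' := by
      intro j'; rw [Finset.mul_sum]
    simp_rw [h2]
    rw [Finset.sum_eq_single j]
    · rw [he.1 j, mul_one]
    · intro j' _ hne; rw [he.2 j j' (Ne.symm hne), mul_zero]
    · intro h; exact absurd (Finset.mem_univ j) h
  rw [key]

lemma composed {p k : ℕ} {e : Fin p → Fin p → ℝ} (he : ONFamily e)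
    {σv : Fin p → ℝ} {σ : ℝ} (hσv : ∀ j : Fin p, (j : ℕ) < k → σv j = σ)
    (βstar : Fin p → ℝ) (ψ : ℝ → ℝ) :
    ((specMat e fun j => if (j : ℕ) < k then Real.sqrt (σv j) else 0).mulVec
      ((specMat e fun j => ψ (σv j)).mulVec
        ((specMat e fun j => if (j : ℕ) < k then 1 else 0).mulVec βstar)))
    = fun i => ψ σ * ∑ j : Fin p, ((if (j : ℕ) < k then Real.sqrt (σv j) else 0) *
        ((if (j : ℕ) < k then 1 else 0) * (∑ i', e j i' * βstar i'))) * e j i := by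
  rw [specMat_mulVec e _ βstar, specMat_mulVec_span he, specMat_mulVec_span he]
  funext i
  rw [Finset.mul_sum]
  refine Finset.sum_congr rfl fun j _ => ?_
  by_cases h : (j : ℕ) < k
  · simp only [h, if_true, hσv j h]; ring
  · simp [h]

lemma l2norm_smul {n : ℕ} (c : ℝ) (v : Fin n → ℝ) :
    l2norm (fun i => c * v i) = |c| * l2norm v := by
  unfold l2norm
  rw [← Real.sqrt_sq_eq_abs c, ← Real.sqrt_mul (sq_nonneg _)]
  congr 1
  rw [Finset.mul_sum]
  exact Finset.sum_congr rfl fun i _ => by ring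

lemma l2norm_nonneg {n : ℕ} (v : Fin n → ℝ) : 0 ≤ l2norm v := Real.sqrt_nonneg _

/-- plateau covariance saturation: with `σ₁=…=σ_k=σ`, `σ_{k+1}=…=σ_p=ε`,
`0 < ε < σ ≤ 1`, `|⟨β*,e_j⟩| = α*` for `j ≤ k` and `⟨β*,e_j⟩ = 0` otherwise, and
`SNR := (‖Σ^{1/2}β*‖₂/σ_ξ)·σ√N/√(Tr(Σ_{Jᶜ}²))` with `4 < SNR ≤ bσ/ε` for a fixed
`b ∈ (0,1)`, letting `I := {t > 1 : ε/b ≤ 1/t < σ}` (on which the estimation dimension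
equals `k`), one has
`inf_{t∈I} r^{GF}_t(V_{J*},V_{J*ᶜ}) ≤ inf_{t∈I} r^{Ridge}_t(V_{J*},V_{J*ᶜ})`. -/
theorem plateau_saturation (p k N : ℕ) (σ ε αs σξ b : ℝ)
    (e : Fin p → Fin p → ℝ) (σv : Fin p → ℝ) (βstar : Fin p → ℝ)
    (hk1 : 1 ≤ k) (hkp : k < p) (hN : 0 < N)
    (hε : 0 < ε) (hεσ : ε < σ) (hσ1 : σ ≤ 1) (hαs : 0 < αs) (hσξ : 0 < σξ)
    (hb : 0 < b) (hb1 : b < 1)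
    (he : ONFamily e)
    (hσv : ∀ j : Fin p, σv j = if (j : ℕ) < k then σ else ε)
    (hβ : ∀ j : Fin p,
      ((j : ℕ) < k → |∑ i, βstar i * e j i| = αs) ∧
      (k ≤ (j : ℕ) → ∑ i, βstar i * e j i = 0))
    (hSNRlow : 4 < l2norm ((specMat e fun j => Real.sqrt (σv j)).mulVec βstar) / σξ *
        (σ * Real.sqrt N / Real.sqrt (Matrix.trace
          ((specMat e fun j => if (j : ℕ) < k then 0 else σv j) *
            (specMat e fun j => if (j : ℕ) < k then 0 else σv j)))))
    (hSNRhigh : l2norm ((specMat e fun j => Real.sqrt (σv j)).mulVec βstar) / σξ *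
        (σ * Real.sqrt N / Real.sqrt (Matrix.trace
          ((specMat e fun j => if (j : ℕ) < k then 0 else σv j) *
            (specMat e fun j => if (j : ℕ) < k then 0 else σv j)))) ≤ b * σ / ε) :
    sInf ((fun t => rate N e σv (fun x => Real.exp (-(t * x))) k βstar σξ t) ''
        {t : ℝ | 1 < t ∧ ε / b ≤ t⁻¹ ∧ t⁻¹ < σ}) ≤
      sInf ((fun t => rate N e σv (fun x => (x * t + 1)⁻¹) k βstar σξ t) ''
        {t : ℝ | 1 < t ∧ ε / b ≤ t⁻¹ ∧ t⁻¹ < σ}) := by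
  set I : Set ℝ := {t : ℝ | 1 < t ∧ ε / b ≤ t⁻¹ ∧ t⁻¹ < σ} with hIdef
  have hσ : 0 < σ := lt_trans hε hεσ
  have hSNR4 : (4 : ℝ) < b * σ / ε := lt_of_lt_of_le hSNRlow hSNRhigh
  have h4ε : 4 * ε < b * σ := (lt_div_iff₀ hε).mp hSNR4
  have hεbσ : ε < σ * b := by nlinarith
  have hεb : ε < b := by nlinarith
  have hσlt : ∀ j : Fin p, (j : ℕ) < k → σv j = σ := by
    intro j hj; rw [hσv j, if_pos hj]
  have ht0 : b / ε ∈ I := by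
    refine ⟨(one_lt_div hε).mpr hεb, ?_, ?_⟩
    · rw [inv_div]
    · rw [inv_div]; exact (div_lt_iff₀ hb).mpr hεbσ
  have hpt : ∀ t ∈ I,
      rate N e σv (fun x => Real.exp (-(t * x))) k βstar σξ t ≤
        rate N e σv (fun x => (x * t + 1)⁻¹) k βstar σξ t := by
    intro t ht
    have ht1 : (1 : ℝ) < t := ht.1
    have ht0' : 0 < t := lt_trans one_pos ht1
    have hden : 0 < σ * t + 1 := by positivity
    unfold rate
    refine add_le_add_left (add_le_add_left (add_le_add_left ?_ _) _) _
    rw [composed he hσlt βstar (fun x => Real.exp (-(t * x))),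
      composed he hσlt βstar (fun x => (x * t + 1)⁻¹),
      l2norm_smul, l2norm_smul]
    refine mul_le_mul_of_nonneg_right ?_ (l2norm_nonneg _)
    rw [abs_of_pos (Real.exp_pos _), abs_of_pos (inv_pos.mpr hden)]
    rw [Real.exp_neg]
    refine inv_anti₀ hden ?_
    have := Real.add_one_le_exp (t * σ)
    nlinarith
  have hnonneg : ∀ t ∈ I,
      0 ≤ rate N e σv (fun x => Real.exp (-(t * x))) k βstar σξ t := by
    intro t ht
    have ht0' : (0 : ℝ) ≤ t := le_of_lt (lt_trans one_pos ht.1)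
    unfold rate
    refine add_nonneg (add_nonneg (add_nonneg (l2norm_nonneg _) ?_) (l2norm_nonneg _)) ?_
    · exact mul_nonneg hσξ.le (Real.sqrt_nonneg _)
    · exact mul_nonneg (mul_nonneg hσξ.le ht0') (Real.sqrt_nonneg _)
  have hbdd : BddBelow ((fun t => rate N e σv (fun x => Real.exp (-(t * x))) k βstar σξ t) '' I) := by
    refine ⟨0, ?_⟩
    rintro x ⟨t, htI, rfl⟩
    exact hnonneg t htI
  refine le_csInf ⟨_, ⟨b / ε, ht0, rfl⟩⟩ ?_
  rintro y ⟨t, htI, rfl⟩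
  exact le_trans (csInf_le hbdd ⟨t, htI, rfl⟩) (hpt t htI)


end SpecFSD5
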